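/- Let 𝔣 be a finite-dimensional real simple Lie algebra with negative definite Killing form, and let n ≥ 1. Let 𝔤 be the direct sum of n+1 copies of 𝔣, with componentwise Lie bracket. Suppose 𝔪 is a nonzero linear subspace of 𝔤 such that for every Z ∈ 𝔣 and every (Y₁,…,Y_{n+1}) ∈ 𝔪 the element ([Z,Y₁],…,[Z,Y_{n+1}]) lies in 𝔪 (invariance under the diagonal adjoint action), and such that 𝔪 contains no such invariant subspace other than 0 and 𝔪 itself (irreducibility). Then there exist real numbers α₁,…,α_{n+1} such that 𝔪 = {(α₁X, α₂X, …, α_{n+1}X) : X ∈ 𝔣}. -/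

import Mathlib

open LieAlgebra Module LinearMap

lemma schur_aux (𝔣 : Type*) [LieRing 𝔣] [LieAlgebra ℝ 𝔣] [FiniteDimensional ℝ 𝔣]
    (hsimple : LieAlgebra.IsSimple ℝ 𝔣)
    (hneg : ∀ X : 𝔣, X ≠ 0 → killingForm ℝ 𝔣 X X < 0)
    (φ : 𝔣 →ₗ[ℝ] 𝔣) (hφ : ∀ Z X : 𝔣, φ ⁅Z, X⁆ = ⁅Z, φ X⁆) :
    ∃ a : ℝ, ∀ X, φ X = a • X := by
  have hnt : Nontrivial 𝔣 := by
    by_contra h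
    rw [not_nontrivial_iff_subsingleton] at h
    exact hsimple.non_abelian ⟨fun x y => Subsingleton.elim _ _⟩
  have h2 : ∀ X : 𝔣, LieAlgebra.ad ℝ 𝔣 X ∘ₗ φ = φ ∘ₗ LieAlgebra.ad ℝ 𝔣 X := by
    intro X; ext y; simp [hφ]
  have h1 : ∀ X : 𝔣, LieAlgebra.ad ℝ 𝔣 (φ X) = φ ∘ₗ LieAlgebra.ad ℝ 𝔣 X := by
    intro X; ext y
    show ⁅φ X, y⁆ = φ ⁅X, y⁆
    rw [← lie_skew, ← hφ, ← lie_skew X y, map_neg]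
  have hsym : ∀ X Y : 𝔣, killingForm ℝ 𝔣 (φ X) Y = killingForm ℝ 𝔣 X (φ Y) := by
    intro X Y
    rw [killingForm_apply_apply, killingForm_apply_apply, h1, h1,
      ← LinearMap.comp_assoc, ← h2, LinearMap.comp_assoc]
  letI core : InnerProductSpace.Core ℝ 𝔣 :=
    { inner := fun X Y => -killingForm ℝ 𝔣 X Y
      conj_inner_symm := by
        intro x y
        simp only [starRingEnd_apply, star_trivial, neg_inj]
        exact LieModule.traceForm_comm ℝ 𝔣 𝔣 y x
      re_inner_nonneg := by
        intro x
        simp only [RCLike.re_to_real]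
        rcases eq_or_ne x 0 with rfl | hx
        · simp
        · linarith [hneg x hx]
      add_left := by intro x y z; simp; ring
      smul_left := by
        intro x y r
        simp only [starRingEnd_apply, star_trivial, map_smul, LinearMap.smul_apply,
          smul_eq_mul]
        ring
      definite := by
        intro x hx
        by_contra h
        have := hneg x h
        simp only [neg_eq_zero] at hx
        linarith }
  letI : NormedAddCommGroup 𝔣 := core.toNormedAddCommGroup
  letI : InnerProductSpace ℝ 𝔣 := InnerProductSpace.ofCore core.toCore
  have hS : φ.IsSymmetric := by
    intro x y
    show -killingForm ℝ 𝔣 (φ x) y = -killingForm ℝ 𝔣 x (φ y)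
    rw [hsym]
  obtain ⟨μ, hμ⟩ : ∃ μ : ℝ, Module.End.HasEigenvalue (φ : Module.End ℝ 𝔣) μ :=
    ⟨_, hS.hasEigenvalue_iSup_of_finiteDimensional⟩
  obtain ⟨v, hv⟩ := hμ.exists_hasEigenvector
  let I : LieIdeal ℝ 𝔣 :=
    { carrier := {X | φ X = μ • X}
      add_mem' := by intro a b ha hb; simp only [Set.mem_setOf_eq] at *
                     rw [map_add, ha, hb, smul_add]
      zero_mem' := by simp
      smul_mem' := by intro c a ha; simp only [Set.mem_setOf_eq] at *
                      rw [map_smul, ha, smul_comm]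
      lie_mem := by intro Z X hX; simp only [Set.mem_setOf_eq] at *
                    rw [hφ, hX, lie_smul] }
  have hvI : v ∈ I := hv.apply_eq_smul
  have hIne : I ≠ ⊥ := by
    intro h
    rw [h, LieSubmodule.mem_bot] at hvI
    exact hv.2 hvI
  rcases hsimple.eq_bot_or_eq_top I with h | h
  · exact absurd h hIne
  · refine ⟨μ, fun X => ?_⟩
    have : X ∈ I := by rw [h]; trivial
    exact this

/-- Every nonzero irreducible subspace of 𝔣^{n+1} invariant under the
diagonal adjoint action is of the form {(α₁X, …, α_{n+1}X) : X ∈ 𝔣}. -/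
theorem stmt_1 (𝔣 : Type*) [LieRing 𝔣] [LieAlgebra ℝ 𝔣] [FiniteDimensional ℝ 𝔣]
    (hsimple : LieAlgebra.IsSimple ℝ 𝔣)
    (hneg : ∀ X : 𝔣, X ≠ 0 → killingForm ℝ 𝔣 X X < 0)
    (n : ℕ) (hn : 1 ≤ n)
    (𝔪 : Submodule ℝ (Fin (n + 1) → 𝔣)) (h𝔪ne : 𝔪 ≠ ⊥)
    (hinv : ∀ Z : 𝔣, ∀ Y ∈ 𝔪, (fun i => ⁅Z, Y i⁆) ∈ 𝔪)
    (hirr : ∀ 𝔫 : Submodule ℝ (Fin (n + 1) → 𝔣), 𝔫 ≤ 𝔪 →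
      (∀ Z : 𝔣, ∀ Y ∈ 𝔫, (fun i => ⁅Z, Y i⁆) ∈ 𝔫) → 𝔫 = ⊥ ∨ 𝔫 = 𝔪) :
    ∃ α : Fin (n + 1) → ℝ,
      (𝔪 : Set (Fin (n + 1) → 𝔣)) = {y | ∃ X : 𝔣, y = fun i => α i • X} := by
  classical
  obtain ⟨y0, hy0m, hy0⟩ := Submodule.exists_mem_ne_zero_of_ne_bot h𝔪ne
  obtain ⟨i, hi⟩ : ∃ i, y0 i ≠ 0 := by
    by_contra h; push_neg at h; exact hy0 (funext h)
  -- injectivity of evaluation at i on 𝔪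
  have hker : ∀ y ∈ 𝔪, y i = 0 → y = 0 := by
    set N : Submodule ℝ (Fin (n + 1) → 𝔣) :=
      𝔪 ⊓ LinearMap.ker (LinearMap.proj (R := ℝ) (φ := fun _ : Fin (n + 1) => 𝔣) i) with hN
    have hNinv : ∀ Z : 𝔣, ∀ Y ∈ N, (fun k => ⁅Z, Y k⁆) ∈ N := by
      intro Z Y hY
      refine ⟨hinv Z Y hY.1, ?_⟩
      have : Y i = 0 := hY.2
      show ⁅Z, Y i⁆ = 0
      rw [this, lie_zero]
    rcases hirr N inf_le_left hNinv with h | h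
    · intro y hy hyi
      have : y ∈ N := ⟨hy, by simpa using hyi⟩
      rw [h] at this
      simpa using this
    · exfalso
      have : y0 ∈ N := h ▸ hy0m
      exact hi this.2
  -- surjectivity of evaluation at i on 𝔪
  have hsurj : ∀ X : 𝔣, ∃ y ∈ 𝔪, y i = X := by
    let I : LieIdeal ℝ 𝔣 :=
      { carrier := {X | ∃ y ∈ 𝔪, y i = X}
        add_mem' := by
          rintro a b ⟨y, hy, rfl⟩ ⟨z, hz, rfl⟩
          exact ⟨y + z, 𝔪.add_mem hy hz, rfl⟩
        zero_mem' := ⟨0, 𝔪.zero_mem, rfl⟩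
        smul_mem' := by
          rintro c a ⟨y, hy, rfl⟩
          exact ⟨c • y, 𝔪.smul_mem c hy, rfl⟩
        lie_mem := by
          rintro Z a ⟨y, hy, rfl⟩
          exact ⟨fun k => ⁅Z, y k⁆, hinv Z y hy, rfl⟩ }
    have hIne : I ≠ ⊥ := by
      intro h
      have : y0 i ∈ I := ⟨y0, hy0m, rfl⟩
      rw [h, LieSubmodule.mem_bot] at this
      exact hi this
    rcases hsimple.eq_bot_or_eq_top I with h | h
    · exact absurd h hIne
    · intro X
      have : X ∈ I := by rw [h]; trivial
      exact this
  -- the evaluation equivalence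
  let π : 𝔪 →ₗ[ℝ] 𝔣 :=
    (LinearMap.proj (R := ℝ) (φ := fun _ : Fin (n + 1) => 𝔣) i).comp 𝔪.subtype
  have hπbij : Function.Bijective π := by
    constructor
    · intro y z h
      have := hker ((y : Fin (n + 1) → 𝔣) - z) (𝔪.sub_mem y.2 z.2) (by
        have : (y : Fin (n + 1) → 𝔣) i = (z : Fin (n + 1) → 𝔣) i := h
        simp [this])
      exact Subtype.ext (sub_eq_zero.mp this)
    · intro X
      obtain ⟨y, hy, hyi⟩ := hsurj X
      exact ⟨⟨y, hy⟩, hyi⟩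
  let e : 𝔪 ≃ₗ[ℝ] 𝔣 := LinearEquiv.ofBijective π hπbij
  have he : ∀ Y : 𝔪, e Y = (Y : Fin (n + 1) → 𝔣) i := fun _ => rfl
  have key : ∀ (Z X : 𝔣),
      ((e.symm ⁅Z, X⁆ : 𝔪) : Fin (n + 1) → 𝔣) = fun k => ⁅Z, (e.symm X : Fin (n + 1) → 𝔣) k⁆ := by
    intro Z X
    set Y := e.symm X with hY
    have hmem : (fun k => ⁅Z, (Y : Fin (n + 1) → 𝔣) k⁆) ∈ 𝔪 := hinv Z _ Y.2
    have : e ⟨_, hmem⟩ = ⁅Z, X⁆ := by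
      rw [he]
      show ⁅Z, (Y : Fin (n + 1) → 𝔣) i⁆ = ⁅Z, X⁆
      rw [← he, hY, e.apply_symm_apply]
    have h2 : e.symm ⁅Z, X⁆ = ⟨_, hmem⟩ := by
      rw [← this, e.symm_apply_apply]
    rw [h2]
  -- the component maps
  let ψ : Fin (n + 1) → (𝔣 →ₗ[ℝ] 𝔣) := fun j =>
    (LinearMap.proj (R := ℝ) (φ := fun _ : Fin (n + 1) => 𝔣) j).comp
      (𝔪.subtype.comp e.symm.toLinearMap)
  have hφeq : ∀ (j : Fin (n + 1)) (Z X : 𝔣), ψ j ⁅Z, X⁆ = ⁅Z, ψ j X⁆ := by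
    intro j Z X
    show ((e.symm ⁅Z, X⁆ : 𝔪) : Fin (n + 1) → 𝔣) j = ⁅Z, (e.symm X : Fin (n + 1) → 𝔣) j⁆
    rw [key]
  choose α hα using fun j => schur_aux 𝔣 hsimple hneg (ψ j) (hφeq j)
  refine ⟨α, ?_⟩
  ext y
  constructor
  · intro hy
    refine ⟨y i, funext fun j => ?_⟩
    have h1 : e.symm (y i) = ⟨y, hy⟩ :=
      e.symm_apply_eq.mpr (he ⟨y, hy⟩).symm
    have : ψ j (y i) = y j := by
      show ((e.symm (y i) : 𝔪) : Fin (n + 1) → 𝔣) j = y j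
      rw [h1]
    rw [← this, hα j (y i)]
  · rintro ⟨X, rfl⟩
    have : (fun j => α j • X) = ((e.symm X : 𝔪) : Fin (n + 1) → 𝔣) := by
      funext j
      rw [← hα j X]
      rfl
    rw [this]
    exact (e.symm X).2
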